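/- Let A and E be real tensors of size n₁×n₂×n₃ and B = A+E (entrywise). Let Ap be a Moore-Penrose inverse of A and Bp a Moore-Penrose inverse of B. Then ‖Bp − Ap‖₂ ≤ ((1+√5)/2)·max{‖Ap‖₂², ‖Bp‖₂²}·‖E‖₂. -/

import Mathlib

open scoped Matrix.Norms.L2Operator

noncomputable section

/-- The t-product of third-order tensors. -/
def tProd {n₁ n₂ n₃ n₄ : ℕ} [NeZero n₃] (A : Fin n₁ → Fin n₂ → ZMod n₃ → ℝ)
    (B : Fin n₂ → Fin n₄ → ZMod n₃ → ℝ) : Fin n₁ → Fin n₄ → ZMod n₃ → ℝ :=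
  fun i j k => ∑ l : Fin n₂, ∑ m : ZMod n₃, A i l (k - m) * B l j m

/-- The Frobenius norm of a third-order tensor. -/
def frobNorm {n₁ n₂ n₃ : ℕ} [NeZero n₃] (A : Fin n₁ → Fin n₂ → ZMod n₃ → ℝ) : ℝ :=
  Real.sqrt (∑ i : Fin n₁, ∑ j : Fin n₂, ∑ k : ZMod n₃, (A i j k) ^ 2)

/-- The block circulant matrix of a third-order tensor. -/
def bcirc {n₁ n₂ n₃ : ℕ} (A : Fin n₁ → Fin n₂ → ZMod n₃ → ℝ) :
    Matrix (Fin n₁ × ZMod n₃) (Fin n₂ × ZMod n₃) ℝ :=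
  fun p q => A p.1 q.1 (p.2 - q.2)

/-- The spectral norm of a third-order tensor: the L2 operator norm of its
block circulant matrix. -/
def specNorm {n₁ n₂ n₃ : ℕ} [NeZero n₃] (A : Fin n₁ → Fin n₂ → ZMod n₃ → ℝ) : ℝ :=
  ‖bcirc A‖

/-- The identity tensor. -/
def tId (n n₃ : ℕ) : Fin n → Fin n → ZMod n₃ → ℝ :=
  fun i j k => if i = j ∧ k = 0 then 1 else 0

/-- The tensor transpose. -/
def tTrans {n₁ n₂ n₃ : ℕ} (A : Fin n₁ → Fin n₂ → ZMod n₃ → ℝ) :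
    Fin n₂ → Fin n₁ → ZMod n₃ → ℝ :=
  fun i j k => A j i (-k)

/-- `X` is a Moore-Penrose inverse of `A`. -/
def IsMPInv {n₁ n₂ n₃ : ℕ} [NeZero n₃] (A : Fin n₁ → Fin n₂ → ZMod n₃ → ℝ)
    (X : Fin n₂ → Fin n₁ → ZMod n₃ → ℝ) : Prop :=
  tProd (tProd A X) A = A ∧ tProd (tProd X A) X = X ∧
    tTrans (tProd A X) = tProd A X ∧ tTrans (tProd X A) = tProd X A

/-- The `i`-th DFT block of a third-order tensor. -/
def dftBlock {n₁ n₂ n₃ : ℕ} [NeZero n₃] (A : Fin n₁ → Fin n₂ → ZMod n₃ → ℝ) (i : ZMod n₃) :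
    Matrix (Fin n₁) (Fin n₂) ℂ :=
  fun p q => ∑ k : ZMod n₃,
    Complex.exp (-2 * Real.pi * Complex.I * (i.val : ℂ) * (k.val : ℂ) / (n₃ : ℂ)) * (A p q k : ℂ)

end



open scoped Matrix.Norms.L2Operator RealInnerProductSpace
set_option linter.unusedSectionVars false
set_option maxHeartbeats 1000000

noncomputable section WedinAux

open Matrix

variable {m n : Type*} [Fintype m] [Fintype n] [DecidableEq m] [DecidableEq n]

/-- Matrix-vector multiplication as a map of Euclidean spaces. -/
def wedinMv (M : Matrix m n ℝ) (x : EuclideanSpace ℝ n) : EuclideanSpace ℝ m :=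
  (EuclideanSpace.equiv m ℝ).symm (M *ᵥ x)

lemma wedinMv_norm_le (M : Matrix m n ℝ) (x : EuclideanSpace ℝ n) :
    ‖wedinMv M x‖ ≤ ‖M‖ * ‖x‖ :=
  M.l2_opNorm_mulVec x

lemma wedinMv_mul {l : Type*} [Fintype l] (M : Matrix m n ℝ) (N : Matrix n l ℝ)
    (x : EuclideanSpace ℝ l) : wedinMv (M * N) x = wedinMv M (wedinMv N x) := by
  ext i
  exact congrFun (Matrix.mulVec_mulVec x M N).symm i

lemma wedinMv_one (x : EuclideanSpace ℝ n) : wedinMv 1 x = x := by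
  ext i
  simp [wedinMv]

lemma wedinMv_matSub (M N : Matrix m n ℝ) (x : EuclideanSpace ℝ n) :
    wedinMv (M - N) x = wedinMv M x - wedinMv N x := by
  ext i
  exact congrFun (Matrix.sub_mulVec M N x) i

lemma wedinMv_matAdd (M N : Matrix m n ℝ) (x : EuclideanSpace ℝ n) :
    wedinMv (M + N) x = wedinMv M x + wedinMv N x := by
  ext i
  exact congrFun (Matrix.add_mulVec M N x) i

lemma wedinMv_matNeg (M : Matrix m n ℝ) (x : EuclideanSpace ℝ n) :
    wedinMv (-M) x = -wedinMv M x := by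
  ext i
  exact congrFun (Matrix.neg_mulVec x M) i

lemma wedinMv_sub (M : Matrix m n ℝ) (x y : EuclideanSpace ℝ n) :
    wedinMv M (x - y) = wedinMv M x - wedinMv M y := by
  ext i
  exact congrFun (Matrix.mulVec_sub M x y) i

lemma wedinMv_inner (M : Matrix m n ℝ) (x : EuclideanSpace ℝ n) (y : EuclideanSpace ℝ m) :
    ⟪wedinMv M x, y⟫ = ⟪x, wedinMv Mᵀ y⟫ := by
  simp only [wedinMv, PiLp.inner_apply, RCLike.inner_apply, conj_trivial]
  show ∑ i, y i * (M *ᵥ x) i = ∑ j, (Mᵀ *ᵥ y) j * x j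
  simp only [Matrix.mulVec, dotProduct, Matrix.transpose_apply, Finset.sum_mul,
    Finset.mul_sum]
  rw [Finset.sum_comm]
  apply Finset.sum_congr rfl
  intro j _
  apply Finset.sum_congr rfl
  intro i _
  ring

/-- Pythagoras for a symmetric idempotent. -/
lemma wedin_pyth (P : Matrix m m ℝ) (hP2 : P * P = P) (hPt : Pᵀ = P)
    (v : EuclideanSpace ℝ m) :
    ‖v‖ ^ 2 = ‖wedinMv P v‖ ^ 2 + ‖v - wedinMv P v‖ ^ 2 := by
  have horth : ⟪wedinMv P v, v - wedinMv P v⟫ = 0 := by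
    rw [wedinMv_inner, hPt, wedinMv_sub, ← wedinMv_mul, hP2, sub_self, inner_zero_right]
  have := norm_add_sq_real (wedinMv P v) (v - wedinMv P v)
  rw [horth] at this
  simpa using this

lemma wedinMv_proj_le (P : Matrix m m ℝ) (hP2 : P * P = P) (hPt : Pᵀ = P)
    (v : EuclideanSpace ℝ m) : ‖v - wedinMv P v‖ ≤ ‖v‖ := by
  have h := wedin_pyth P hP2 hPt v
  nlinarith [norm_nonneg (wedinMv P v), norm_nonneg (v - wedinMv P v), norm_nonneg v]

lemma wedin_transpose_norm (M : Matrix m n ℝ) : ‖Mᵀ‖ = ‖M‖ := by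
  rw [← Matrix.l2_opNorm_conjTranspose M]
  congr 1

lemma wedin_sqrt5 : (2:ℝ) ≤ Real.sqrt 5 := by
  nlinarith [Real.sq_sqrt (by norm_num : (5:ℝ) ≥ 0), Real.sqrt_nonneg 5]

lemma wedin_le_of_sq_le {x y : ℝ} (hx : 0 ≤ x) (hy : 0 ≤ y) (h : x ^ 2 ≤ y ^ 2) : x ≤ y := by
  nlinarith

lemma wedin_mul_le_max {a b e : ℝ} (ha : 0 ≤ a) (hb : 0 ≤ b) (he : 0 ≤ e) :
    b * e * a ≤ max (a ^ 2) (b ^ 2) * e := by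
  rcases le_total a b with h | h
  · calc b * e * a = (b * a) * e := by ring
      _ ≤ (b * b) * e := mul_le_mul_of_nonneg_right (mul_le_mul_of_nonneg_left h hb) he
      _ = b ^ 2 * e := by ring
      _ ≤ max (a ^ 2) (b ^ 2) * e := mul_le_mul_of_nonneg_right (le_max_right _ _) he
  · calc b * e * a = (b * a) * e := by ring
      _ ≤ (a * a) * e := mul_le_mul_of_nonneg_right (mul_le_mul_of_nonneg_right h ha) he
      _ = a ^ 2 * e := by ring
      _ ≤ max (a ^ 2) (b ^ 2) * e := mul_le_mul_of_nonneg_right (le_max_left _ _) he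

lemma wedin_quad (α s t : ℝ) (hα : 0 ≤ α) (hs : 0 ≤ s) (ht : 0 ≤ t) :
    (α * s + α * t) ^ 2 + (α * s) ^ 2 ≤ ((1 + Real.sqrt 5) / 2 * α) ^ 2 * (s ^ 2 + t ^ 2) := by
  have h5 : Real.sqrt 5 ^ 2 = 5 := Real.sq_sqrt (by norm_num)
  have h5' : (2:ℝ) ≤ Real.sqrt 5 := wedin_sqrt5
  have E1 : ((1 + Real.sqrt 5) / 2 * α) ^ 2 * (s ^ 2 + t ^ 2)
      - ((α * s + α * t) ^ 2 + (α * s) ^ 2)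
      = (Real.sqrt 5 + 1) / 8 * (α * ((Real.sqrt 5 - 1) * s - 2 * t)) ^ 2 := by
    linear_combination (α ^ 2 * ((3 - Real.sqrt 5) / 8 * s ^ 2 + s * t / 2 + t ^ 2 / 4)) * h5
  have hpos : 0 ≤ (Real.sqrt 5 + 1) / 8 * (α * ((Real.sqrt 5 - 1) * s - 2 * t)) ^ 2 := by
    positivity
  linarith

theorem wedin_matrix (A E : Matrix m n ℝ) (Ap Bp : Matrix n m ℝ)
    (h1 : A * Ap * A = A) (h2 : Ap * A * Ap = Ap)
    (h3 : (A * Ap)ᵀ = A * Ap) (h4 : (Ap * A)ᵀ = Ap * A)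
    (k1 : (A + E) * Bp * (A + E) = A + E) (k2 : Bp * (A + E) * Bp = Bp)
    (k3 : ((A + E) * Bp)ᵀ = (A + E) * Bp) (k4 : (Bp * (A + E))ᵀ = Bp * (A + E)) :
    ‖Bp - Ap‖ ≤ ((1 + Real.sqrt 5) / 2) * max (‖Ap‖ ^ 2) (‖Bp‖ ^ 2) * ‖E‖ := by
  obtain ⟨B, hB⟩ : ∃ X : Matrix m n ℝ, X = A + E := ⟨_, rfl⟩
  rw [← hB] at k1 k2 k3 k4
  obtain ⟨T, hT⟩ : ∃ X : Matrix n m ℝ, X = Bp - Ap := ⟨_, rfl⟩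
  rw [← hT]
  obtain ⟨P, hP⟩ : ∃ X : Matrix n n ℝ, X = Bp * B := ⟨_, rfl⟩
  obtain ⟨Q, hQ⟩ : ∃ X : Matrix m m ℝ, X = A * Ap := ⟨_, rfl⟩
  have hQQ : Q * Q = Q := by
    rw [hQ, show A * Ap * (A * Ap) = A * Ap * A * Ap by simp only [Matrix.mul_assoc], h1]
  have hPP : P * P = P := by
    rw [hP, show Bp * B * (Bp * B) = Bp * (B * Bp * B) by simp only [Matrix.mul_assoc], k1]
  have hApQ : Ap * Q = Ap := by
    rw [hQ, show Ap * (A * Ap) = Ap * A * Ap by simp only [Matrix.mul_assoc], h2]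
  have hPt : Pᵀ = P := by rw [hP]; exact k4
  have hQt : Qᵀ = Q := by rw [hQ]; exact h3
  -- Aᵀ * (1 - Q) = 0
  have hAtQ : Aᵀ * (1 - Q) = 0 := by
    have h : Aᵀ * Q = Aᵀ := by
      calc Aᵀ * Q = Aᵀ * (A * Ap)ᵀ := by rw [hQ, h3]
        _ = (A * Ap * A)ᵀ := (Matrix.transpose_mul (A * Ap) A).symm
        _ = Aᵀ := by rw [h1]
    rw [Matrix.mul_sub, Matrix.mul_one, h, sub_self]
  -- Bp = Bp * Bpᵀ * Bᵀ
  have hBpBBt : Bp = Bp * Bpᵀ * Bᵀ := by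
    calc Bp = Bp * B * Bp := k2.symm
      _ = Bp * (B * Bp) := by rw [Matrix.mul_assoc]
      _ = Bp * (B * Bp)ᵀ := by rw [k3]
      _ = Bp * (Bpᵀ * Bᵀ) := by rw [Matrix.transpose_mul]
      _ = Bp * Bpᵀ * Bᵀ := by rw [Matrix.mul_assoc]
  -- Ap = Aᵀ * Apᵀ * Ap
  have hApAAt : Ap = Aᵀ * Apᵀ * Ap := by
    calc Ap = Ap * A * Ap := h2.symm
      _ = (Ap * A)ᵀ * Ap := by rw [h4]
      _ = Aᵀ * Apᵀ * Ap := by rw [Matrix.transpose_mul]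
  -- (1 - P) * Bᵀ = 0
  have hPBt : (1 - P) * Bᵀ = 0 := by
    have h : P * Bᵀ = Bᵀ := by
      calc P * Bᵀ = (Bp * B)ᵀ * Bᵀ := by rw [hP, k4]
        _ = (B * (Bp * B))ᵀ := (Matrix.transpose_mul B (Bp * B)).symm
        _ = (B * Bp * B)ᵀ := by rw [Matrix.mul_assoc]
        _ = Bᵀ := by rw [k1]
    rw [Matrix.sub_mul, Matrix.one_mul, h, sub_self]
  -- key1 : P * T = -(Bp * E * Ap) + Bp * Bpᵀ * Eᵀ * (1 - Q)
  have key1 : P * T = -(Bp * E * Ap) + Bp * Bpᵀ * Eᵀ * (1 - Q) := by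
    have hPBp : P * Bp = Bp := by
      rw [hP, show Bp * B * Bp = Bp * (B * Bp) by rw [Matrix.mul_assoc],
        show Bp * (B * Bp) = Bp * B * Bp by rw [Matrix.mul_assoc], k2]
    have e1 : P * T = Bp * (1 - Q) - Bp * E * Ap := by
      rw [hT, Matrix.mul_sub, hPBp]
      have : P * Ap = Bp * Q + Bp * E * Ap := by
        calc P * Ap = Bp * ((A + E) * Ap) := by rw [hP, hB, Matrix.mul_assoc]
          _ = Bp * (A * Ap) + Bp * (E * Ap) := by rw [Matrix.add_mul, Matrix.mul_add]
          _ = Bp * Q + Bp * E * Ap := by rw [hQ, Matrix.mul_assoc]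
      rw [this, Matrix.mul_sub, Matrix.mul_one]
      abel
    have e2 : Bp * (1 - Q) = Bp * Bpᵀ * Eᵀ * (1 - Q) := by
      conv_lhs => rw [hBpBBt]
      have hBt : Bᵀ = Aᵀ + Eᵀ := by rw [hB, Matrix.transpose_add]
      rw [Matrix.mul_assoc (Bp * Bpᵀ), hBt, Matrix.add_mul, hAtQ, zero_add,
        ← Matrix.mul_assoc]
    rw [e1, e2]; abel
  -- key2 : T - P * T = (1 - P) * (Eᵀ * Apᵀ * Ap)
  have key2 : T - P * T = (1 - P) * (Eᵀ * Apᵀ * Ap) := by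
    have hPBp0 : (1 - P) * Bp = 0 := by
      rw [Matrix.sub_mul, Matrix.one_mul, hP,
        show Bp * B * Bp = Bp * (B * Bp) by rw [Matrix.mul_assoc],
        show Bp * (B * Bp) = Bp * B * Bp by rw [Matrix.mul_assoc], k2, sub_self]
    have hPAt : (1 - P) * Aᵀ = -((1 - P) * Eᵀ) := by
      have h : (1 - P) * (Bᵀ - Eᵀ) = (1 - P) * Aᵀ := by
        congr 1
        rw [hB, Matrix.transpose_add]; abel
      rw [← h, Matrix.mul_sub, hPBt, zero_sub]
    calc T - P * T = (1 - P) * T := by rw [Matrix.sub_mul, Matrix.one_mul]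
      _ = (1 - P) * Bp - (1 - P) * Ap := by rw [hT, Matrix.mul_sub]
      _ = -((1 - P) * Ap) := by rw [hPBp0, zero_sub]
      _ = -((1 - P) * Aᵀ * (Apᵀ * Ap)) := by
          rw [Matrix.mul_assoc, ← Matrix.mul_assoc Aᵀ, ← hApAAt]
      _ = (1 - P) * Eᵀ * (Apᵀ * Ap) := by rw [hPAt]; simp [Matrix.neg_mul]
      _ = (1 - P) * (Eᵀ * Apᵀ * Ap) := by simp only [Matrix.mul_assoc]
  set a : ℝ := ‖Ap‖ with ha
  set b : ℝ := ‖Bp‖ with hb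
  set e : ℝ := ‖E‖ with he
  have ha0 : 0 ≤ a := norm_nonneg _
  have hb0 : 0 ≤ b := norm_nonneg _
  have he0 : 0 ≤ e := norm_nonneg _
  set α : ℝ := max (a ^ 2) (b ^ 2) * e with hα
  have hα0 : 0 ≤ α := mul_nonneg (le_trans (by positivity) (le_max_left _ _)) he0
  have hba : b * e * a ≤ α := wedin_mul_le_max ha0 hb0 he0
  have hbb : b * b * e ≤ α := by
    calc b * b * e = b ^ 2 * e := by ring
      _ ≤ α := mul_le_mul_of_nonneg_right (le_max_right _ _) he0
  have haa : e * a * a ≤ α := by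
    calc e * a * a = a ^ 2 * e := by ring
      _ ≤ α := mul_le_mul_of_nonneg_right (le_max_left _ _) he0
  have hEt : ‖Eᵀ‖ = e := wedin_transpose_norm E
  have hBpt : ‖Bpᵀ‖ = b := wedin_transpose_norm Bp
  have hApt : ‖Apᵀ‖ = a := wedin_transpose_norm Ap
  set φ : ℝ := (1 + Real.sqrt 5) / 2 with hφ
  have hφ0 : 0 ≤ φ := by rw [hφ]; positivity
  -- pointwise bound
  have hmain : ∀ x : EuclideanSpace ℝ m, ‖wedinMv T x‖ ≤ φ * α * ‖x‖ := by
    intro x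
    set x₁ : EuclideanSpace ℝ m := wedinMv Q x with hx₁
    set x₂ : EuclideanSpace ℝ m := x - x₁ with hx₂
    set s : ℝ := ‖x₁‖ with hs
    set t : ℝ := ‖x₂‖ with ht
    have hs0 : 0 ≤ s := norm_nonneg _
    have ht0 : 0 ≤ t := norm_nonneg _
    have hxpyth : ‖x‖ ^ 2 = s ^ 2 + t ^ 2 := wedin_pyth Q hQQ hQt x
    -- wedinMv Ap x = wedinMv Ap x₁
    have hApx : wedinMv Ap x = wedinMv Ap x₁ := by
      rw [hx₁, ← wedinMv_mul, hApQ]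
    set v : EuclideanSpace ℝ n := wedinMv T x with hv
    set t₁ : EuclideanSpace ℝ n := wedinMv P v with ht₁
    set t₂ : EuclideanSpace ℝ n := v - t₁ with ht₂
    have hvpyth : ‖v‖ ^ 2 = ‖t₁‖ ^ 2 + ‖t₂‖ ^ 2 := wedin_pyth P hPP hPt v
    -- bound t₁
    have ht₁bound : ‖t₁‖ ≤ α * s + α * t := by
      have e1 : t₁ = wedinMv (-(Bp * E * Ap)) x + wedinMv (Bp * Bpᵀ * Eᵀ * (1 - Q)) x := by
        rw [ht₁, hv, ← wedinMv_mul, key1, wedinMv_matAdd]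
      have e2 : wedinMv (-(Bp * E * Ap)) x = -(wedinMv (Bp * E) (wedinMv Ap x₁)) := by
        rw [wedinMv_matNeg, wedinMv_mul, hApx]
      have e3 : wedinMv (Bp * Bpᵀ * Eᵀ * (1 - Q)) x = wedinMv (Bp * Bpᵀ * Eᵀ) x₂ := by
        rw [wedinMv_mul, wedinMv_matSub, wedinMv_one, ← hx₁, ← hx₂]
      have b1 : ‖wedinMv (Bp * E) (wedinMv Ap x₁)‖ ≤ b * e * a * s := by
        calc ‖wedinMv (Bp * E) (wedinMv Ap x₁)‖ ≤ ‖Bp * E‖ * ‖wedinMv Ap x₁‖ :=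
              wedinMv_norm_le _ _
          _ ≤ ‖Bp * E‖ * (a * s) := by
              apply mul_le_mul_of_nonneg_left _ (norm_nonneg _)
              exact wedinMv_norm_le Ap x₁
          _ ≤ (b * e) * (a * s) := by
              apply mul_le_mul_of_nonneg_right (Matrix.l2_opNorm_mul Bp E)
              positivity
          _ = b * e * a * s := by ring
      have b2 : ‖wedinMv (Bp * Bpᵀ * Eᵀ) x₂‖ ≤ b * b * e * t := by
        calc ‖wedinMv (Bp * Bpᵀ * Eᵀ) x₂‖ ≤ ‖Bp * Bpᵀ * Eᵀ‖ * t := wedinMv_norm_le _ _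
          _ ≤ (‖Bp * Bpᵀ‖ * ‖Eᵀ‖) * t := by
              apply mul_le_mul_of_nonneg_right (Matrix.l2_opNorm_mul _ _) ht0
          _ ≤ ((b * b) * e) * t := by
              rw [hEt]
              apply mul_le_mul_of_nonneg_right _ ht0
              apply mul_le_mul_of_nonneg_right _ he0
              calc ‖Bp * Bpᵀ‖ ≤ ‖Bp‖ * ‖Bpᵀ‖ := Matrix.l2_opNorm_mul _ _
                _ = b * b := by rw [hBpt]
          _ = b * b * e * t := by ring
      calc ‖t₁‖ ≤ ‖wedinMv (Bp * E) (wedinMv Ap x₁)‖ + ‖wedinMv (Bp * Bpᵀ * Eᵀ) x₂‖ := by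
            rw [e1, e2, e3]
            exact (norm_add_le _ _).trans (by rw [norm_neg])
        _ ≤ b * e * a * s + b * b * e * t := add_le_add b1 b2
        _ ≤ α * s + α * t := add_le_add (mul_le_mul_of_nonneg_right hba hs0)
            (mul_le_mul_of_nonneg_right hbb ht0)
    -- bound t₂
    have ht₂bound : ‖t₂‖ ≤ α * s := by
      have e4 : t₂ = wedinMv (1 - P) (wedinMv (Eᵀ * Apᵀ * Ap) x₁) := by
        have hx' : wedinMv (Eᵀ * Apᵀ * Ap) x₁ = wedinMv (Eᵀ * Apᵀ * Ap) x := by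
          rw [hx₁, ← wedinMv_mul, Matrix.mul_assoc (Eᵀ * Apᵀ), hApQ]
        rw [hx', ht₂, ht₁, hv, ← wedinMv_mul, ← wedinMv_matSub, key2]
        rw [wedinMv_mul]
      have e5 : wedinMv (1 - P) (wedinMv (Eᵀ * Apᵀ * Ap) x₁)
          = wedinMv (Eᵀ * Apᵀ * Ap) x₁ - wedinMv P (wedinMv (Eᵀ * Apᵀ * Ap) x₁) := by
        rw [wedinMv_matSub, wedinMv_one]
      have b3 : ‖wedinMv (Eᵀ * Apᵀ * Ap) x₁‖ ≤ e * a * a * s := by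
        calc ‖wedinMv (Eᵀ * Apᵀ * Ap) x₁‖ ≤ ‖Eᵀ * Apᵀ * Ap‖ * s := wedinMv_norm_le _ _
          _ ≤ (‖Eᵀ * Apᵀ‖ * a) * s := by
              apply mul_le_mul_of_nonneg_right _ hs0
              calc ‖Eᵀ * Apᵀ * Ap‖ ≤ ‖Eᵀ * Apᵀ‖ * ‖Ap‖ := Matrix.l2_opNorm_mul _ _
                _ = ‖Eᵀ * Apᵀ‖ * a := by rw [ha]
          _ ≤ ((e * a) * a) * s := by
              apply mul_le_mul_of_nonneg_right _ hs0
              apply mul_le_mul_of_nonneg_right _ ha0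
              calc ‖Eᵀ * Apᵀ‖ ≤ ‖Eᵀ‖ * ‖Apᵀ‖ := Matrix.l2_opNorm_mul _ _
                _ = e * a := by rw [hEt, hApt]
          _ = e * a * a * s := by ring
      calc ‖t₂‖
          = ‖wedinMv (Eᵀ * Apᵀ * Ap) x₁ - wedinMv P (wedinMv (Eᵀ * Apᵀ * Ap) x₁)‖ := by
            rw [e4, e5]
        _ ≤ ‖wedinMv (Eᵀ * Apᵀ * Ap) x₁‖ := wedinMv_proj_le P hPP hPt _
        _ ≤ e * a * a * s := b3
        _ ≤ α * s := mul_le_mul_of_nonneg_right haa hs0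
    -- combine
    have hsq : ‖v‖ ^ 2 ≤ (φ * α * ‖x‖) ^ 2 := by
      have h1' : ‖t₁‖ ^ 2 ≤ (α * s + α * t) ^ 2 := by
        have h0 : 0 ≤ α * s + α * t := by positivity
        have := mul_le_mul ht₁bound ht₁bound (norm_nonneg t₁) h0
        calc ‖t₁‖ ^ 2 = ‖t₁‖ * ‖t₁‖ := by ring
          _ ≤ (α * s + α * t) * (α * s + α * t) := this
          _ = (α * s + α * t) ^ 2 := by ring
      have h2' : ‖t₂‖ ^ 2 ≤ (α * s) ^ 2 := by
        have h0 : 0 ≤ α * s := by positivity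
        have := mul_le_mul ht₂bound ht₂bound (norm_nonneg t₂) h0
        calc ‖t₂‖ ^ 2 = ‖t₂‖ * ‖t₂‖ := by ring
          _ ≤ (α * s) * (α * s) := this
          _ = (α * s) ^ 2 := by ring
      calc ‖v‖ ^ 2 = ‖t₁‖ ^ 2 + ‖t₂‖ ^ 2 := hvpyth
        _ ≤ (α * s + α * t) ^ 2 + (α * s) ^ 2 := add_le_add h1' h2'
        _ ≤ (φ * α) ^ 2 * (s ^ 2 + t ^ 2) := wedin_quad α s t hα0 hs0 ht0
        _ = (φ * α * ‖x‖) ^ 2 := by rw [← hxpyth]; ring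
    exact wedin_le_of_sq_le (norm_nonneg v) (by positivity) hsq
  -- conclude
  rw [Matrix.l2_opNorm_def]
  rw [show φ * max (a ^ 2) (b ^ 2) * e = φ * α by rw [hα]; ring]
  apply ContinuousLinearMap.opNorm_le_bound _ (by positivity)
  intro x
  exact hmain x

end WedinAux

section BcircAux

open Matrix

lemma bcirc_tProd {n₁ n₂ n₃ n₄ : ℕ} [NeZero n₃] (A : Fin n₁ → Fin n₂ → ZMod n₃ → ℝ)
    (B : Fin n₂ → Fin n₄ → ZMod n₃ → ℝ) :
    bcirc (tProd A B) = bcirc A * bcirc B := by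
  ext ⟨i, k⟩ ⟨j, m⟩
  simp only [bcirc, tProd, Matrix.mul_apply, Fintype.sum_prod_type]
  apply Finset.sum_congr rfl
  intro l _
  apply Fintype.sum_equiv (Equiv.addRight m)
  intro x
  have hx : k - m - x = k - (x + m) := by ring
  simp [Equiv.addRight, hx]

lemma bcirc_tTrans {n₁ n₂ n₃ : ℕ} (A : Fin n₁ → Fin n₂ → ZMod n₃ → ℝ) :
    bcirc (tTrans A) = (bcirc A)ᵀ := by
  ext ⟨i, k⟩ ⟨j, m⟩
  show A j i (-(k - m)) = A j i (m - k)
  rw [neg_sub]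

lemma bcirc_add' {n₁ n₂ n₃ : ℕ} (X Y : Fin n₁ → Fin n₂ → ZMod n₃ → ℝ) :
    bcirc (X + Y) = bcirc X + bcirc Y := rfl

lemma bcirc_sub' {n₁ n₂ n₃ : ℕ} (X Y : Fin n₁ → Fin n₂ → ZMod n₃ → ℝ) :
    bcirc (X - Y) = bcirc X - bcirc Y := rfl

end BcircAux

open Matrix in

theorem mp_inverse_perturbation_spectral (n₁ n₂ n₃ : ℕ) [NeZero n₃]
    (hn₁ : 0 < n₁) (hn₂ : 0 < n₂)
    (A E : Fin n₁ → Fin n₂ → ZMod n₃ → ℝ)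
    (Ap Bp : Fin n₂ → Fin n₁ → ZMod n₃ → ℝ)
    (hAp : IsMPInv A Ap) (hBp : IsMPInv (A + E) Bp) :
    specNorm (Bp - Ap) ≤
      ((1 + Real.sqrt 5) / 2) * max (specNorm Ap ^ 2) (specNorm Bp ^ 2) * specNorm E := by
  obtain ⟨ha1, ha2, ha3, ha4⟩ := hAp
  obtain ⟨hb1, hb2, hb3, hb4⟩ := hBp
  have m1 : bcirc A * bcirc Ap * bcirc A = bcirc A := by
    have := congrArg bcirc ha1
    simpa only [bcirc_tTrans, bcirc_tProd, bcirc_add'] using this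
  have m2 : bcirc Ap * bcirc A * bcirc Ap = bcirc Ap := by
    have := congrArg bcirc ha2
    simpa only [bcirc_tTrans, bcirc_tProd, bcirc_add'] using this
  have m3 : (bcirc A * bcirc Ap)ᵀ = bcirc A * bcirc Ap := by
    have := congrArg bcirc ha3
    simpa only [bcirc_tTrans, bcirc_tProd, bcirc_add'] using this
  have m4 : (bcirc Ap * bcirc A)ᵀ = bcirc Ap * bcirc A := by
    have := congrArg bcirc ha4
    simpa only [bcirc_tTrans, bcirc_tProd, bcirc_add'] using this
  have n1 : (bcirc A + bcirc E) * bcirc Bp * (bcirc A + bcirc E) = bcirc A + bcirc E := by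
    have := congrArg bcirc hb1
    simpa only [bcirc_tTrans, bcirc_tProd, bcirc_add'] using this
  have n2 : bcirc Bp * (bcirc A + bcirc E) * bcirc Bp = bcirc Bp := by
    have := congrArg bcirc hb2
    simpa only [bcirc_tTrans, bcirc_tProd, bcirc_add'] using this
  have n3 : ((bcirc A + bcirc E) * bcirc Bp)ᵀ = (bcirc A + bcirc E) * bcirc Bp := by
    have := congrArg bcirc hb3
    simpa only [bcirc_tTrans, bcirc_tProd, bcirc_add'] using this
  have n4 : (bcirc Bp * (bcirc A + bcirc E))ᵀ = bcirc Bp * (bcirc A + bcirc E) := by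
    have := congrArg bcirc hb4
    simpa only [bcirc_tTrans, bcirc_tProd, bcirc_add'] using this
  have := wedin_matrix (bcirc A) (bcirc E) (bcirc Ap) (bcirc Bp) m1 m2 m3 m4 n1 n2 n3 n4
  simpa [specNorm, bcirc_sub'] using this
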